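/- Let E be a linearly ordered set with least element 0 containing at least one positive element, let X be a finite set, and let a ≠ b be two points not in X. Suppose d is a function defined on pairs from X ∪ {a} and on pairs from X ∪ {b} (agreeing on pairs from X) such that d restricts to an E-valued ultrametric on X ∪ {a} and to an E-valued ultrametric on X ∪ {b}. Then there exists r ∈ E with r > 0 such that setting d(a,b) = d(b,a) = r makes d an E-valued ultrametric on X ∪ {a,b}. Moreover, if d(a,x₀) ≠ d(b,x₀) for some x₀ ∈ X, then such r is unique (namely r = max(d(a,x₀), d(b,x₀))). -/
import Mathlib


/-- `d` restricts to an `E`-valued ultrametric on the set `s ⊆ Y`, where the least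
element `⊥` of `E` plays the role of `0`. -/
def IsUltrametricOn {Y E : Type*} [LinearOrder E] [OrderBot E]
    (d : Y → Y → E) (s : Set Y) : Prop :=
  (∀ x ∈ s, ∀ y ∈ s, (d x y = ⊥ ↔ x = y)) ∧
  (∀ x ∈ s, ∀ y ∈ s, d x y = d y x) ∧
  (∀ x ∈ s, ∀ y ∈ s, ∀ z ∈ s, d x z ≤ max (d x y) (d y z))

/-- Strong amalgamation of two one-point extensions `X ∪ {a}` and `X ∪ {b}` of a finite
`E`-valued ultrametric space `X`: some positive value `r` for `d(a,b)` makes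
`X ∪ {a,b}` an ultrametric space; and if the two extensions are non-isomorphic, as
witnessed by `x₀ ∈ X` with `d(a,x₀) ≠ d(b,x₀)`, then such `r` is unique, namely
`r = max (d a x₀) (d b x₀)`. -/
theorem stmt4 {Y E : Type*} [DecidableEq Y] [LinearOrder E] [OrderBot E]
    (hpos : ∃ r : E, ⊥ < r)
    (X : Set Y) (hXfin : X.Finite)
    (a b : Y) (hab : a ≠ b) (ha : a ∉ X) (hb : b ∉ X)
    (d : Y → Y → E)
    (h1 : IsUltrametricOn d (X ∪ {a}))
    (h2 : IsUltrametricOn d (X ∪ {b})) :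
    (∃ r : E, ⊥ < r ∧
      IsUltrametricOn
        (fun x y => if (x = a ∧ y = b) ∨ (x = b ∧ y = a) then r else d x y)
        (X ∪ {a, b})) ∧
    (∀ x₀ ∈ X, d a x₀ ≠ d b x₀ →
      ∀ r : E, ⊥ < r →
        IsUltrametricOn
          (fun x y => if (x = a ∧ y = b) ∨ (x = b ∧ y = a) then r else d x y)
          (X ∪ {a, b}) →
        r = max (d a x₀) (d b x₀)) := by
  obtain ⟨e1, s1, t1⟩ := h1
  obtain ⟨e2, s2, t2⟩ := h2
  have haM : a ∈ X ∪ {a} := Set.mem_union_right _ rfl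
  have hbM : b ∈ X ∪ {b} := Set.mem_union_right _ rfl
  have hm1 : ∀ x ∈ X, x ∈ X ∪ {a} := fun x hx => Set.mem_union_left _ hx
  have hm2 : ∀ x ∈ X, x ∈ X ∪ {b} := fun x hx => Set.mem_union_left _ hx
  have neA : ∀ u ∈ X, u ≠ a := fun u hu h => ha (h ▸ hu)
  have neB : ∀ u ∈ X, u ≠ b := fun u hu h => hb (h ▸ hu)
  have daa : d a a = ⊥ := (e1 a haM a haM).mpr rfl
  have dbb : d b b = ⊥ := (e2 b hbM b hbM).mpr rfl
  have dapos : ∀ x ∈ X, ⊥ < d a x := by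
    intro x hx
    refine lt_of_le_of_ne bot_le fun h => ?_
    have hax : a = x := (e1 a haM x (hm1 x hx)).mp h.symm
    exact ha (by rw [hax]; exact hx)
  have hmem : ∀ x, x ∈ X ∪ {a, b} → x ∈ X ∨ x = a ∨ x = b := by
    intro x hx
    simp only [Set.mem_union, Set.mem_insert_iff, Set.mem_singleton_iff] at hx
    tauto
  -- the key lemma: any r with these properties works
  have key : ∀ r : E, ⊥ < r →
      (∀ y ∈ X, r ≤ max (d a y) (d b y)) →
      (∀ z ∈ X, d a z ≤ max r (d b z)) →
      (∀ z ∈ X, d b z ≤ max r (d a z)) →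
      IsUltrametricOn
        (fun x y => if (x = a ∧ y = b) ∨ (x = b ∧ y = a) then r else d x y)
        (X ∪ {a, b}) := by
    intro r hr P2 P3a P3b
    set D := fun x y => if (x = a ∧ y = b) ∨ (x = b ∧ y = a) then r else d x y with hDdef
    have hDd : ∀ u v : Y, ¬(u = a ∧ v = b) → ¬(u = b ∧ v = a) → D u v = d u v :=
      fun u v h h' => if_neg (by tauto)
    have Dab : D a b = r := if_pos (Or.inl ⟨rfl, rfl⟩)
    have Dba : D b a = r := if_pos (Or.inr ⟨rfl, rfl⟩)
    have DXX : ∀ u ∈ X, ∀ v ∈ X, D u v = d u v :=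
      fun u hu v hv => hDd u v (fun h => neA u hu h.1) (fun h => neB u hu h.1)
    have DxA : ∀ u ∈ X, D u a = d u a :=
      fun u hu => hDd u a (fun h => neA u hu h.1) (fun h => neB u hu h.1)
    have DAx : ∀ v ∈ X, D a v = d a v :=
      fun v hv => hDd a v (fun h => neB v hv h.2) (fun h => hab h.1)
    have DxB : ∀ u ∈ X, D u b = d u b :=
      fun u hu => hDd u b (fun h => neA u hu h.1) (fun h => neB u hu h.1)
    have DBx : ∀ v ∈ X, D b v = d b v :=
      fun v hv => hDd b v (fun h => hab h.1.symm) (fun h => neA v hv h.2)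
    have Daa : D a a = d a a := hDd a a (fun h => hab h.2) (fun h => hab h.1)
    have Dbb : D b b = d b b := hDd b b (fun h => hab h.1.symm) (fun h => hab h.2.symm)
    refine ⟨?_, ?_, ?_⟩
    · -- identity of indiscernibles
      intro x hx y hy
      rcases hmem x hx with hx' | hx' | hx' <;> rcases hmem y hy with hy' | hy' | hy'
      · rw [DXX x hx' y hy']; exact e1 x (hm1 x hx') y (hm1 y hy')
      · rw [hy', DxA x hx']; exact e1 x (hm1 x hx') a haM
      · rw [hy', DxB x hx']; exact e2 x (hm2 x hx') b hbM
      · rw [hx', DAx y hy']; exact e1 a haM y (hm1 y hy')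
      · rw [hx', hy', Daa]; exact e1 a haM a haM
      · rw [hx', hy', Dab]; exact ⟨fun h => absurd h hr.ne', fun h => absurd h hab⟩
      · rw [hx', DBx y hy']; exact e2 b hbM y (hm2 y hy')
      · rw [hx', hy', Dba]; exact ⟨fun h => absurd h hr.ne', fun h => absurd h hab.symm⟩
      · rw [hx', hy', Dbb]; exact e2 b hbM b hbM
    · -- symmetry
      intro x hx y hy
      rcases hmem x hx with hx' | hx' | hx' <;> rcases hmem y hy with hy' | hy' | hy'
      · rw [DXX x hx' y hy', DXX y hy' x hx']; exact s1 x (hm1 x hx') y (hm1 y hy')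
      · rw [hy', DxA x hx', DAx x hx']; exact s1 x (hm1 x hx') a haM
      · rw [hy', DxB x hx', DBx x hx']; exact s2 x (hm2 x hx') b hbM
      · rw [hx', DAx y hy', DxA y hy']; exact s1 a haM y (hm1 y hy')
      · rw [hx', hy']
      · rw [hx', hy', Dab, Dba]
      · rw [hx', DBx y hy', DxB y hy']; exact s2 b hbM y (hm2 y hy')
      · rw [hx', hy', Dba, Dab]
      · rw [hx', hy']
    · -- ultrametric triangle inequality
      intro x hx y hy z hz
      rcases hmem x hx with hx' | hx' | hx' <;> rcases hmem y hy with hy' | hy' | hy' <;>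
        rcases hmem z hz with hz' | hz' | hz'
      · rw [DXX x hx' z hz', DXX x hx' y hy', DXX y hy' z hz']
        exact t1 x (hm1 x hx') y (hm1 y hy') z (hm1 z hz')
      · rw [hz', DxA x hx', DXX x hx' y hy', DxA y hy']
        exact t1 x (hm1 x hx') y (hm1 y hy') a haM
      · rw [hz', DxB x hx', DXX x hx' y hy', DxB y hy']
        exact t2 x (hm2 x hx') y (hm2 y hy') b hbM
      · rw [hy', DXX x hx' z hz', DxA x hx', DAx z hz']
        exact t1 x (hm1 x hx') a haM z (hm1 z hz')
      · rw [hy', hz', DxA x hx', Daa]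
        exact t1 x (hm1 x hx') a haM a haM
      · rw [hy', hz', DxB x hx', DxA x hx', Dab]
        calc d x b = d b x := s2 x (hm2 x hx') b hbM
          _ ≤ max r (d a x) := P3b x hx'
          _ = max (d x a) r := by rw [max_comm, s1 a haM x (hm1 x hx')]
      · rw [hy', DXX x hx' z hz', DxB x hx', DBx z hz']
        exact t2 x (hm2 x hx') b hbM z (hm2 z hz')
      · rw [hy', hz', DxA x hx', DxB x hx', Dba]
        calc d x a = d a x := s1 x (hm1 x hx') a haM
          _ ≤ max r (d b x) := P3a x hx'
          _ = max (d x b) r := by rw [max_comm, s2 b hbM x (hm2 x hx')]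
      · rw [hy', hz', DxB x hx', Dbb]
        exact t2 x (hm2 x hx') b hbM b hbM
      · rw [hx', DAx z hz', DAx y hy', DXX y hy' z hz']
        exact t1 a haM y (hm1 y hy') z (hm1 z hz')
      · rw [hx', hz', Daa, DAx y hy', DxA y hy']
        exact t1 a haM y (hm1 y hy') a haM
      · rw [hx', hz', Dab, DAx y hy', DxB y hy']
        calc r ≤ max (d a y) (d b y) := P2 y hy'
          _ = max (d a y) (d y b) := by rw [s2 y (hm2 y hy') b hbM]
      · rw [hx', hy', DAx z hz', Daa]
        exact t1 a haM a haM z (hm1 z hz')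
      · rw [hx', hy', hz', Daa, daa]; exact bot_le
      · rw [hx', hy', hz', Dab, Daa]; exact le_max_right _ _
      · rw [hx', hy', DAx z hz', Dab, DBx z hz']
        exact P3a z hz'
      · rw [hx', hy', hz', Daa, daa]; exact bot_le
      · rw [hx', hy', hz', Dab]; exact le_max_left _ _
      · rw [hx', DBx z hz', DBx y hy', DXX y hy' z hz']
        exact t2 b hbM y (hm2 y hy') z (hm2 z hz')
      · rw [hx', hz', Dba, DBx y hy', DxA y hy']
        calc r ≤ max (d a y) (d b y) := P2 y hy'
          _ = max (d b y) (d y a) := by rw [max_comm, s1 y (hm1 y hy') a haM]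
      · rw [hx', hz', Dbb, DBx y hy', DxB y hy']
        exact t2 b hbM y (hm2 y hy') b hbM
      · rw [hx', hy', DBx z hz', Dba, DAx z hz']
        exact P3b z hz'
      · rw [hx', hy', hz', Dba]; exact le_max_left _ _
      · rw [hx', hy', hz', Dbb, dbb]; exact bot_le
      · rw [hx', hy', DBx z hz', Dbb]
        exact t2 b hbM b hbM z (hm2 z hz')
      · rw [hx', hy', hz', Dba, Dbb]; exact le_max_right _ _
      · rw [hx', hy', hz', Dbb, dbb]; exact bot_le
  constructor
  · -- existence
    rcases X.eq_empty_or_nonempty with hX | ⟨x0, hx0⟩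
    · obtain ⟨r, hr⟩ := hpos
      exact ⟨r, hr, key r hr (by simp [hX]) (by simp [hX]) (by simp [hX])⟩
    · obtain ⟨w, hwF, hw⟩ :=
        hXfin.toFinset.exists_min_image (fun u => max (d a u) (d b u))
          ⟨x0, hXfin.mem_toFinset.mpr hx0⟩
      have hwX : w ∈ X := hXfin.mem_toFinset.mp hwF
      have hdwb : d w b = d b w := s2 w (hm2 w hwX) b hbM
      have hdwa : d w a = d a w := s1 w (hm1 w hwX) a haM
      refine ⟨max (d a w) (d b w), lt_of_lt_of_le (dapos w hwX) (le_max_left _ _),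
        key _ (lt_of_lt_of_le (dapos w hwX) (le_max_left _ _)) ?_ ?_ ?_⟩
      · intro y hy; exact hw y (hXfin.mem_toFinset.mpr hy)
      · intro z hz
        calc d a z ≤ max (d a w) (d w z) := t1 a haM w (hm1 w hwX) z (hm1 z hz)
          _ ≤ max (d a w) (max (d w b) (d b z)) :=
            max_le_max le_rfl (t2 w (hm2 w hwX) b hbM z (hm2 z hz))
          _ = max (max (d a w) (d b w)) (d b z) := by rw [hdwb, ← max_assoc]
      · intro z hz
        calc d b z ≤ max (d b w) (d w z) := t2 b hbM w (hm2 w hwX) z (hm2 z hz)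
          _ ≤ max (d b w) (max (d w a) (d a z)) :=
            max_le_max le_rfl (t1 w (hm1 w hwX) a haM z (hm1 z hz))
          _ = max (max (d a w) (d b w)) (d a z) := by
            rw [hdwa, ← max_assoc, max_comm (d b w) (d a w)]
  · -- uniqueness
    intro x₀ hx₀ hne r hr hult
    obtain ⟨e', s', t'⟩ := hult
    have hx₀M : x₀ ∈ X ∪ {a, b} := Set.mem_union_left _ hx₀
    have haM' : a ∈ X ∪ {a, b} := Set.mem_union_right _ (by simp)
    have hbM' : b ∈ X ∪ {a, b} := Set.mem_union_right _ (by simp)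
    have ne0a : x₀ ≠ a := neA x₀ hx₀
    have ne0b : x₀ ≠ b := neB x₀ hx₀
    have hs : d x₀ b = d b x₀ := s2 x₀ (hm2 x₀ hx₀) b hbM
    have T1' : r ≤ max (d a x₀) (d b x₀) := by
      have := t' a haM' x₀ hx₀M b hbM'
      rw [← hs]
      simpa [hab, Ne.symm hab, ne0a, ne0b] using this
    have T2' : d a x₀ ≤ max r (d b x₀) := by
      have := t' a haM' b hbM' x₀ hx₀M
      simpa [hab, Ne.symm hab, ne0a, ne0b] using this
    have T3' : d b x₀ ≤ max r (d a x₀) := by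
      have := t' b hbM' a haM' x₀ hx₀M
      simpa [hab, Ne.symm hab, ne0a, ne0b] using this
    rcases hne.lt_or_gt with h | h
    · rw [max_eq_right h.le]
      refine le_antisymm ?_ ?_
      · calc r ≤ max (d a x₀) (d b x₀) := T1'
          _ = d b x₀ := max_eq_right h.le
      · exact (le_max_iff.mp T3').resolve_right (not_le.mpr h)
    · rw [max_eq_left h.le]
      refine le_antisymm ?_ ?_
      · calc r ≤ max (d a x₀) (d b x₀) := T1'
          _ = d a x₀ := max_eq_left h.le
      · exact (le_max_iff.mp T2').resolve_right (not_le.mpr h)
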